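/- Let f be a bounded complex function on I × J. The set of rows {f(i,·) : i ∈ I} is relatively weakly compact in ℓ^∞(J) if and only if the set of columns {f(·,j) : j ∈ J} is relatively weakly compact in ℓ^∞(I). -/

import Mathlib

open scoped ENNReal

open Filter Topology
noncomputable section
namespace RWC

variable {α : Type*}

theorem exists_tendsto_of_bound (W : Ultrafilter α) (x : α → ℂ) {C : ℝ}
    (hx : ∀ a, ‖x a‖ ≤ C) : ∃ c, Tendsto x ↑W (𝓝 c) := by
  have hc : IsCompact (Metric.closedBall (0:ℂ) C) := isCompact_closedBall _ _
  have hle : ↑(W.map x) ≤ 𝓟 (Metric.closedBall (0:ℂ) C) := by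
    refine le_principal_iff.2 (mem_map.2 ?_)
    filter_upwards with a
    simpa [Metric.mem_closedBall, dist_eq_norm] using hx a
  obtain ⟨c, -, hc⟩ := hc.ultrafilter_le_nhds (W.map x) hle
  exact ⟨c, hc⟩

/-- `ulim` : limit of bounded function along ultrafilter -/
def ulim (W : Ultrafilter α) (x : α → ℂ) : ℂ := limUnder (W : Filter α) x

theorem tendsto_ulim (W : Ultrafilter α) {x : α → ℂ} {C : ℝ}
    (hx : ∀ a, ‖x a‖ ≤ C) : Tendsto x ↑W (𝓝 (ulim W x)) := by
  obtain ⟨c, hc⟩ := exists_tendsto_of_bound W x hx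
  rwa [ulim, hc.limUnder_eq]

theorem ulim_eq {W : Ultrafilter α} {x : α → ℂ} {c : ℂ}
    (h : Tendsto x ↑W (𝓝 c)) : ulim W x = c := h.limUnder_eq

theorem norm_ulim_le {W : Ultrafilter α} {x : α → ℂ} {C : ℝ}
    (hx : ∀ a, ‖x a‖ ≤ C) : ‖ulim W x‖ ≤ C := by
  have h1 : Tendsto (fun a => ‖x a‖) ↑W (𝓝 ‖ulim W x‖) := (tendsto_ulim W hx).norm
  exact le_of_tendsto h1 (Eventually.of_forall hx)

theorem le_norm_ulim {W : Ultrafilter α} {x : α → ℂ} {C δ : ℝ}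
    (hx : ∀ a, ‖x a‖ ≤ C) (h : ∀ᶠ a in ↑W, δ ≤ ‖x a‖) : δ ≤ ‖ulim W x‖ :=
  ge_of_tendsto (tendsto_ulim W hx).norm h

theorem norm_ulim_le_of_eventually {W : Ultrafilter α} {x : α → ℂ} {C δ : ℝ}
    (hx : ∀ a, ‖x a‖ ≤ C) (h : ∀ᶠ a in ↑W, ‖x a‖ ≤ δ) : ‖ulim W x‖ ≤ δ :=
  le_of_tendsto (tendsto_ulim W hx).norm h



open scoped ENNReal

variable {J : Type*}

abbrev Linf (J : Type*) := lp (fun _ : J => ℂ) ∞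

theorem memLinf {x : J → ℂ} {C : ℝ} (hx : ∀ j, ‖x j‖ ≤ C) : Memℓp x ∞ := by
  refine memℓp_infty ⟨C, ?_⟩
  rintro - ⟨j, rfl⟩; exact hx j

def mk (x : J → ℂ) {C : ℝ} (hx : ∀ j, ‖x j‖ ≤ C) : Linf J := ⟨x, memLinf hx⟩

@[simp] theorem mk_apply (x : J → ℂ) {C : ℝ} (hx : ∀ j, ‖x j‖ ≤ C) (j : J) :
    (mk x hx : ∀ _ : J, ℂ) j = x j := rfl

theorem norm_mk_le (x : J → ℂ) {C : ℝ} (hC : 0 ≤ C) (hx : ∀ j, ‖x j‖ ≤ C) :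
    ‖mk x hx‖ ≤ C := lp.norm_le_of_forall_le hC hx

theorem norm_coord_le (x : Linf J) (j : J) : ‖x j‖ ≤ ‖x‖ :=
  lp.norm_apply_le_norm (by norm_num) x j

/-- evaluation at a coordinate as a continuous linear functional -/
def evalCLM (j : J) : Linf J →L[ℂ] ℂ :=
  LinearMap.mkContinuous
    { toFun := fun x => x j
      map_add' := fun x y => by simp [lp.coeFn_add]
      map_smul' := fun c x => by simp [lp.coeFn_smul] }
    1 (fun x => by rw [one_mul]; exact norm_coord_le x j)

@[simp] theorem evalCLM_apply (j : J) (x : Linf J) : evalCLM j x = x j := rfl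

/-- limit along an ultrafilter on J, as a continuous linear functional -/
def ulimCLM (V : Ultrafilter J) : Linf J →L[ℂ] ℂ :=
  LinearMap.mkContinuous
    { toFun := fun x => ulim V (x : J → ℂ)
      map_add' := fun x y => by
        refine ulim_eq ?_
        have h1 := tendsto_ulim V (x := (x : J → ℂ)) (fun j => norm_coord_le x j)
        have h2 := tendsto_ulim V (x := (y : J → ℂ)) (fun j => norm_coord_le y j)
        refine (h1.add h2).congr ?_
        intro j; simp [lp.coeFn_add]
      map_smul' := fun c x => by
        refine ulim_eq ?_
        have h1 := tendsto_ulim V (x := (x : J → ℂ)) (fun j => norm_coord_le x j)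
        refine (h1.const_smul c).congr ?_
        intro j; simp [lp.coeFn_smul] }
    1 (fun x => by
      rw [one_mul]; exact norm_ulim_le (fun j => norm_coord_le x j))

@[simp] theorem ulimCLM_apply (V : Ultrafilter J) (x : Linf J) :
    ulimCLM V x = ulim V (x : J → ℂ) := rfl


section Mvar
variable {J : Type*} (φ : lp (fun _ : J => ℂ) ∞ →L[ℂ] ℂ)

/-- The set of values `‖φ x‖` over `x` in the unit ball supported in `A`. -/
def mset (A : Set J) : Set ℝ :=
  {r | ∃ x : Linf J, (∀ j, ‖x j‖ ≤ 1) ∧ (∀ j ∉ A, x j = 0) ∧ r = ‖φ x‖}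

/-- variation of φ on a set -/
def mvar (A : Set J) : ℝ := sSup (mset φ A)

theorem zero_mem_mset (A : Set J) : (0:ℝ) ∈ mset φ A := by
  refine ⟨0, ?_, ?_, ?_⟩ <;> simp [lp.coeFn_zero]

theorem mset_bddAbove (A : Set J) : BddAbove (mset φ A) := by
  refine ⟨‖φ‖, ?_⟩
  rintro r ⟨x, hx1, -, rfl⟩
  calc ‖φ x‖ ≤ ‖φ‖ * ‖x‖ := φ.le_opNorm x
  _ ≤ ‖φ‖ * 1 := by
      gcongr
      exact lp.norm_le_of_forall_le zero_le_one hx1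
  _ = ‖φ‖ := mul_one _

theorem mvar_nonneg (A : Set J) : 0 ≤ mvar φ A :=
  le_csSup (mset_bddAbove φ A) (zero_mem_mset φ A)

theorem mvar_le (A : Set J) : mvar φ A ≤ ‖φ‖ := by
  refine csSup_le ⟨0, zero_mem_mset φ A⟩ ?_
  rintro r ⟨x, hx1, -, rfl⟩
  calc ‖φ x‖ ≤ ‖φ‖ * ‖x‖ := φ.le_opNorm x
  _ ≤ ‖φ‖ * 1 := by gcongr; exact lp.norm_le_of_forall_le zero_le_one hx1
  _ = ‖φ‖ := mul_one _

theorem mvar_mono {A B : Set J} (h : A ⊆ B) : mvar φ A ≤ mvar φ B := by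
  refine csSup_le_csSup (mset_bddAbove φ B) ⟨0, zero_mem_mset φ A⟩ ?_
  rintro r ⟨x, hx1, hx2, rfl⟩
  exact ⟨x, hx1, fun j hj => hx2 j (fun hA => hj (h hA)), rfl⟩

theorem le_mvar {x : Linf J} {A : Set J} (hx1 : ∀ j, ‖x j‖ ≤ 1)
    (hx2 : ∀ j ∉ A, x j = 0) : ‖φ x‖ ≤ mvar φ A :=
  le_csSup (mset_bddAbove φ A) ⟨x, hx1, hx2, rfl⟩

theorem mvar_empty : mvar φ (∅ : Set J) = 0 := by
  refine le_antisymm ?_ (mvar_nonneg φ _)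
  refine csSup_le ⟨0, zero_mem_mset φ _⟩ ?_
  rintro r ⟨x, hx1, hx2, rfl⟩
  have : x = 0 := by
    ext j
    simpa [lp.coeFn_zero] using hx2 j (by simp)
  simp [this]

theorem nonempty_of_mvar_pos {A : Set J} (h : 0 < mvar φ A) : A.Nonempty := by
  rcases Set.eq_empty_or_nonempty A with rfl | hA
  · rw [mvar_empty] at h
    exact absurd h (lt_irrefl 0)
  · exact hA

/-- masked element : x restricted to A (indicator) -/
def mask (A : Set J) (x : Linf J) : Linf J :=
  mk (A.indicator (x : J → ℂ)) (C := ‖x‖) (fun j => by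
    classical
    by_cases hj : j ∈ A
    · rw [Set.indicator_of_mem hj]
      exact lp.norm_apply_le_norm (by norm_num) x j
    · rw [Set.indicator_of_notMem hj]
      rw [norm_zero]
      exact norm_nonneg x)

@[simp] theorem mask_apply (A : Set J) (x : Linf J) (j : J) :
    (mask A x : ∀ _ : J, ℂ) j = A.indicator (x : J → ℂ) j := rfl

theorem mask_add_mask_compl (A : Set J) (x : Linf J) :
    mask A x + mask Aᶜ x = x := by
  ext j
  rw [lp.coeFn_add]
  show A.indicator (x : J → ℂ) j + Aᶜ.indicator (x : J → ℂ) j = x j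
  classical
  by_cases hj : j ∈ A
  · rw [Set.indicator_of_mem hj, Set.indicator_of_notMem (by simpa using hj), add_zero]
  · rw [Set.indicator_of_notMem hj, Set.indicator_of_mem (by simpa using hj), zero_add]

/-- bound of φ on a masked element via mvar -/
theorem norm_phi_mask_le {A : Set J} (x : Linf J) {c : ℝ} (hc : 0 < c)
    (hx : ∀ j, ‖x j‖ ≤ c) : ‖φ (mask A x)‖ ≤ c * mvar φ A := by
  classical
  set z : Linf J := ((c : ℂ)⁻¹) • mask A x with hz
  have hzj : ∀ j, (z : J → ℂ) j = (c:ℂ)⁻¹ * A.indicator (x : J → ℂ) j := by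
    intro j
    rw [hz, lp.coeFn_smul]
    rfl
  have hz1 : ∀ j, ‖(z : J → ℂ) j‖ ≤ 1 := by
    intro j
    rw [hzj j, norm_mul]
    by_cases hj : j ∈ A
    · rw [Set.indicator_of_mem hj]
      have h1 : ‖((c:ℝ):ℂ)⁻¹‖ = c⁻¹ := by
        rw [norm_inv, Complex.norm_real, Real.norm_of_nonneg hc.le]
      rw [h1]
      calc c⁻¹ * ‖x j‖ ≤ c⁻¹ * c := by
            gcongr
            exact hx j
      _ = 1 := inv_mul_cancel₀ hc.ne'
    · rw [Set.indicator_of_notMem hj]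
      simp
  have hz2 : ∀ j ∉ A, (z : J → ℂ) j = 0 := by
    intro j hj
    rw [hzj j, Set.indicator_of_notMem hj, mul_zero]
  have key : ‖φ z‖ ≤ mvar φ A := le_mvar φ hz1 hz2
  have hmz : (c : ℂ) • z = mask A x := by
    rw [hz, smul_smul, mul_inv_cancel₀ (by exact_mod_cast hc.ne'), one_smul]
  calc ‖φ (mask A x)‖ = ‖φ ((c:ℂ) • z)‖ := by rw [hmz]
  _ = ‖(c:ℂ) • φ z‖ := by rw [map_smul]
  _ = c * ‖φ z‖ := by
      rw [norm_smul, Complex.norm_real, Real.norm_of_nonneg hc.le]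
  _ ≤ c * mvar φ A := by gcongr

/-- key: sum of φ-values on disjointly supported unit vectors -/
theorem mset_add_le {A B : Set J} (hAB : Disjoint A B) {r₁ r₂ : ℝ}
    (h₁ : r₁ ∈ mset φ A) (h₂ : r₂ ∈ mset φ B) : r₁ + r₂ ≤ mvar φ (A ∪ B) := by
  classical
  obtain ⟨x₁, hx₁1, hx₁2, rfl⟩ := h₁
  obtain ⟨x₂, hx₂1, hx₂2, rfl⟩ := h₂
  set a := φ x₁ with ha
  set b := φ x₂ with hb
  set c₁ : ℂ := if a = 0 then 1 else (‖a‖ : ℂ) / a with hc₁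
  set c₂ : ℂ := if b = 0 then 1 else (‖b‖ : ℂ) / b with hc₂
  have hnc₁ : ‖c₁‖ = 1 := by
    rw [hc₁]
    split_ifs with h
    · simp
    · rw [norm_div, Complex.norm_real, Real.norm_of_nonneg (norm_nonneg a),
        div_self (norm_ne_zero_iff.2 h)]
  have hnc₂ : ‖c₂‖ = 1 := by
    rw [hc₂]
    split_ifs with h
    · simp
    · rw [norm_div, Complex.norm_real, Real.norm_of_nonneg (norm_nonneg b),
        div_self (norm_ne_zero_iff.2 h)]
  have hca : c₁ * a = (‖a‖ : ℂ) := by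
    rw [hc₁]
    split_ifs with h
    · simp [h]
    · rw [div_mul_cancel₀ _ h]
  have hcb : c₂ * b = (‖b‖ : ℂ) := by
    rw [hc₂]
    split_ifs with h
    · simp [h]
    · rw [div_mul_cancel₀ _ h]
  set x : Linf J := c₁ • x₁ + c₂ • x₂ with hx
  have hxj : ∀ j, (x : J → ℂ) j = c₁ * x₁ j + c₂ * x₂ j := by
    intro j
    rw [hx, lp.coeFn_add]
    show (c₁ • x₁ : Linf J) j + (c₂ • x₂ : Linf J) j = _
    rw [lp.coeFn_smul, lp.coeFn_smul]
    rfl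
  have hx1 : ∀ j, ‖(x : J → ℂ) j‖ ≤ 1 := by
    intro j
    rw [hxj j]
    by_cases hjA : j ∈ A
    · have hjB : j ∉ B := fun hjB => (Set.disjoint_left.1 hAB) hjA hjB
      rw [hx₂2 j hjB, mul_zero, add_zero, norm_mul, hnc₁, one_mul]
      exact hx₁1 j
    · by_cases hjB : j ∈ B
      · rw [hx₁2 j hjA, mul_zero, zero_add, norm_mul, hnc₂, one_mul]
        exact hx₂1 j
      · rw [hx₁2 j hjA, hx₂2 j hjB, mul_zero, mul_zero, add_zero, norm_zero]
        exact zero_le_one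
  have hx2 : ∀ j ∉ A ∪ B, (x : J → ℂ) j = 0 := by
    intro j hj
    rw [Set.mem_union] at hj
    push_neg at hj
    rw [hxj j, hx₁2 j hj.1, hx₂2 j hj.2, mul_zero, mul_zero, add_zero]
  have hφx : φ x = ((‖a‖ + ‖b‖ : ℝ) : ℂ) := by
    rw [hx, map_add, map_smul, map_smul, smul_eq_mul, smul_eq_mul, ← ha, ← hb,
      hca, hcb, Complex.ofReal_add]
  have hnφx : ‖φ x‖ = ‖a‖ + ‖b‖ := by
    rw [hφx, Complex.norm_real, Real.norm_of_nonneg (by positivity)]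
  calc ‖a‖ + ‖b‖ = ‖φ x‖ := hnφx.symm
  _ ≤ mvar φ (A ∪ B) := le_mvar φ hx1 hx2

/-- superadditivity on disjoint sets -/
theorem mvar_superadd {A B : Set J} (hAB : Disjoint A B) :
    mvar φ A + mvar φ B ≤ mvar φ (A ∪ B) := by
  have h1 : mvar φ A ≤ mvar φ (A ∪ B) - mvar φ B := by
    refine csSup_le ⟨0, zero_mem_mset φ A⟩ ?_
    intro r₁ hr₁
    rw [le_sub_iff_add_le, add_comm]
    rw [← le_sub_iff_add_le]
    refine csSup_le ⟨0, zero_mem_mset φ B⟩ ?_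
    intro r₂ hr₂
    rw [le_sub_iff_add_le, add_comm]
    exact mset_add_le φ hAB hr₁ hr₂
  linarith

/-- subadditivity split : m S ≤ m (S ∩ X) + m (S \ X) -/
theorem mvar_split (S X : Set J) :
    mvar φ S ≤ mvar φ (S ∩ X) + mvar φ (S \ X) := by
  refine csSup_le ⟨0, zero_mem_mset φ S⟩ ?_
  rintro r ⟨x, hx1, hx2, rfl⟩
  have hsplit : x = mask (S ∩ X) x + mask (S \ X) x := by
    classical
    ext j
    rw [lp.coeFn_add]
    show x j = (S ∩ X).indicator (x : J → ℂ) j + (S \ X).indicator (x : J → ℂ) j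
    by_cases hjS : j ∈ S
    · by_cases hjX : j ∈ X
      · rw [Set.indicator_of_mem (show j ∈ S ∩ X from ⟨hjS, hjX⟩),
          Set.indicator_of_notMem (show j ∉ S \ X from fun h => h.2 hjX), add_zero]
      · rw [Set.indicator_of_notMem (show j ∉ S ∩ X from fun h => hjX h.2),
          Set.indicator_of_mem (show j ∈ S \ X from ⟨hjS, hjX⟩), zero_add]
    · rw [hx2 j hjS, Set.indicator_of_notMem (show j ∉ S ∩ X from fun h => hjS h.1),
        Set.indicator_of_notMem (show j ∉ S \ X from fun h => hjS h.1), add_zero]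
  have hm1 : ‖φ (mask (S ∩ X) x)‖ ≤ mvar φ (S ∩ X) := by
    refine le_mvar φ ?_ ?_
    · intro j
      rw [mask_apply]
      classical
      by_cases hj : j ∈ S ∩ X
      · rw [Set.indicator_of_mem hj]
        exact hx1 j
      · rw [Set.indicator_of_notMem hj, norm_zero]
        exact zero_le_one
    · intro j hj
      rw [mask_apply, Set.indicator_of_notMem hj]
  have hm2 : ‖φ (mask (S \ X) x)‖ ≤ mvar φ (S \ X) := by
    refine le_mvar φ ?_ ?_
    · intro j
      rw [mask_apply]
      classical
      by_cases hj : j ∈ S \ X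
      · rw [Set.indicator_of_mem hj]
        exact hx1 j
      · rw [Set.indicator_of_notMem hj, norm_zero]
        exact zero_le_one
    · intro j hj
      rw [mask_apply, Set.indicator_of_notMem hj]
  calc ‖φ x‖ = ‖φ (mask (S ∩ X) x) + φ (mask (S \ X) x)‖ := by
        rw [← map_add, ← hsplit]
  _ ≤ ‖φ (mask (S ∩ X) x)‖ + ‖φ (mask (S \ X) x)‖ := norm_add_le _ _
  _ ≤ mvar φ (S ∩ X) + mvar φ (S \ X) := add_le_add hm1 hm2

end Mvar

variable {I : Type*} {E : Type*} [NormedAddCommGroup E] [NormedSpace ℂ E]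

/-- the weak-convergence-along-every-ultrafilter condition -/
def WCond (g : I → E) : Prop :=
  ∀ U : Ultrafilter I, ∃ x : E, ∀ φ : E →L[ℂ] ℂ,
    Tendsto (fun i => φ (g i)) ↑U (𝓝 (φ x))

theorem isInducing_weak :
    Topology.IsInducing (fun (x : WeakSpace ℂ E) (φ : E →L[ℂ] ℂ) => φ ((toWeakSpace ℂ E).symm x)) := by
  constructor
  rfl

theorem injective_weak_eval :
    Function.Injective (fun (x : WeakSpace ℂ E) (φ : E →L[ℂ] ℂ) => φ ((toWeakSpace ℂ E).symm x)) := by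
  intro x y hxy
  by_contra hne
  have hne' : (toWeakSpace ℂ E).symm x ≠ (toWeakSpace ℂ E).symm y := by
    intro h
    exact hne ((toWeakSpace ℂ E).symm.injective h)
  obtain ⟨φ, hφ⟩ := SeparatingDual.exists_separating_of_ne (R := ℂ) hne'
  exact hφ (congrFun hxy φ)

theorem main_iff {g : I → E} {C : ℝ} (hC : 0 ≤ C) (hb : ∀ i, ‖g i‖ ≤ C) :
    IsCompact (closure (toWeakSpace ℂ E '' Set.range g)) ↔ WCond g := by
  classical
  set e : WeakSpace ℂ E → ((E →L[ℂ] ℂ) → ℂ) :=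
    fun x φ => φ ((toWeakSpace ℂ E).symm x) with he_def
  have he : Topology.IsInducing e := isInducing_weak
  have hinj : Function.Injective e := injective_weak_eval
  set T : Set (WeakSpace ℂ E) := toWeakSpace ℂ E '' Set.range g with hT
  set q : I → ((E →L[ℂ] ℂ) → ℂ) := fun i φ => φ (g i) with hq
  have hkey : ∀ i, e (toWeakSpace ℂ E (g i)) = q i := by
    intro i
    funext φ
    show φ ((toWeakSpace ℂ E).symm (toWeakSpace ℂ E (g i))) = φ (g i)
    rw [LinearEquiv.symm_apply_apply]
  have heT : e '' T = Set.range q := by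
    ext L
    constructor
    · rintro ⟨-, ⟨-, ⟨i, rfl⟩, rfl⟩, rfl⟩
      exact ⟨i, (hkey i).symm⟩
    · rintro ⟨i, rfl⟩
      exact ⟨toWeakSpace ℂ E (g i), ⟨g i, ⟨i, rfl⟩, rfl⟩, hkey i⟩
  -- compactness of closure of range q
  have hQ : IsCompact (closure (Set.range q)) := by
    have hsub : Set.range q ⊆ Set.pi Set.univ (fun φ : E →L[ℂ] ℂ =>
        Metric.closedBall (0:ℂ) (‖φ‖ * C)) := by
      rintro - ⟨i, rfl⟩
      rw [Set.mem_univ_pi]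
      intro φ
      rw [Metric.mem_closedBall, dist_zero_right]
      calc ‖φ (g i)‖ ≤ ‖φ‖ * ‖g i‖ := φ.le_opNorm _
      _ ≤ ‖φ‖ * C := by gcongr; exact hb i
    have hcp : IsCompact (Set.pi Set.univ (fun φ : E →L[ℂ] ℂ =>
        Metric.closedBall (0:ℂ) (‖φ‖ * C))) :=
      isCompact_univ_pi (fun φ => isCompact_closedBall _ _)
    refine hcp.of_isClosed_subset isClosed_closure ?_
    refine closure_minimal hsub ?_
    exact isClosed_set_pi (fun φ _ => Metric.isClosed_closedBall)
  -- step 2 : closure T compact iff closure (range q) ⊆ range e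
  have step2 : IsCompact (closure T) ↔ closure (Set.range q) ⊆ Set.range e := by
    constructor
    · intro h
      have h1 : IsCompact (e '' closure T) := h.image he.continuous
      have h2 : IsClosed (e '' closure T) := h1.isClosed
      have h3 : Set.range q ⊆ e '' closure T := by
        rw [← heT]
        exact Set.image_mono (f := e) subset_closure
      intro L hL
      have := closure_minimal h3 h2 hL
      obtain ⟨x, -, rfl⟩ := this
      exact ⟨x, rfl⟩
    · intro h
      rw [he.isCompact_iff]
      have hce : e '' closure T = closure (Set.range q) := by
        apply Set.Subset.antisymm
        · rw [← heT]
          exact (he.continuous.continuousOn.image_closure).trans (by rw [heT])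
        · intro L hL
          obtain ⟨x, rfl⟩ := h hL
          refine ⟨x, ?_, rfl⟩
          have hmem : x ∈ e ⁻¹' closure (e '' T) := by
            rw [Set.mem_preimage, heT]
            exact hL
          rwa [← he.closure_eq_preimage_closure_image] at hmem
      rw [hce]
      exact hQ
  rw [step2]
  -- step 3 : the ultrafilter condition
  constructor
  · intro h U
    have hbφ : ∀ (φ : E →L[ℂ] ℂ) i, ‖φ (g i)‖ ≤ ‖φ‖ * C := by
      intro φ i
      calc ‖φ (g i)‖ ≤ ‖φ‖ * ‖g i‖ := φ.le_opNorm _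
      _ ≤ ‖φ‖ * C := by gcongr; exact hb i
    set L : (E →L[ℂ] ℂ) → ℂ := fun φ => ulim U (fun i => φ (g i)) with hLdef
    have hLt : Tendsto q ↑U (𝓝 L) :=
      tendsto_pi_nhds.2 (fun φ => tendsto_ulim U (hbφ φ))
    have hLmem : L ∈ closure (Set.range q) :=
      mem_closure_of_tendsto hLt (Eventually.of_forall fun i => ⟨i, rfl⟩)
    obtain ⟨x, hx⟩ := h hLmem
    refine ⟨(toWeakSpace ℂ E).symm x, ?_⟩
    intro φ
    have hphi : φ ((toWeakSpace ℂ E).symm x) = L φ := by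
      rw [← hx]
    rw [hphi]
    exact tendsto_ulim U (hbφ φ)
  · intro h L hL
    rw [mem_closure_iff_ultrafilter] at hL
    obtain ⟨G, hG1, hG2⟩ := hL
    have hne : (Filter.comap q ↑G).NeBot := by
      rw [Filter.comap_neBot_iff]
      intro t ht
      have h1 : t ∩ Set.range q ∈ G := Filter.inter_mem ht hG1
      obtain ⟨y, hy1, i, rfl⟩ := G.nonempty_of_mem h1
      exact ⟨i, hy1⟩
    set U : Ultrafilter I := Ultrafilter.of (Filter.comap q ↑G) with hU
    have hmap : (U.map q : Filter _) ≤ 𝓝 L := by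
      calc (U.map q : Filter _) = Filter.map q ↑U := rfl
      _ ≤ Filter.map q (Filter.comap q ↑G) := Filter.map_mono (Ultrafilter.of_le _)
      _ ≤ ↑G := Filter.map_comap_le
      _ ≤ 𝓝 L := hG2
    obtain ⟨x, hx⟩ := h U
    have hqx : Tendsto q ↑U (𝓝 (e (toWeakSpace ℂ E x))) := by
      rw [tendsto_pi_nhds]
      intro φ
      have : e (toWeakSpace ℂ E x) φ = φ x := by
        simp [he_def]
      rw [this]
      exact hx φ
    have hqL : Tendsto q ↑U (𝓝 L) := hmap
    have : L = e (toWeakSpace ℂ E x) := tendsto_nhds_unique hqL hqx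
    exact ⟨_, this.symm⟩


end RWC

namespace RWC
open scoped ENNReal
section Claim
variable {J : Type*} (φ : lp (fun _ : J => ℂ) ∞ →L[ℂ] ℂ)

theorem mvar_finset_sum_le {ι : Type*} (t : Finset ι) (D : ι → Set J)
    (hD : ∀ a ∈ t, ∀ b ∈ t, a ≠ b → Disjoint (D a) (D b)) :
    ∑ b ∈ t, mvar φ (D b) ≤ ‖φ‖ := by
  classical
  have key : ∑ b ∈ t, mvar φ (D b) ≤ mvar φ (⋃ b ∈ t, D b) := by
    induction t using Finset.induction_on with
    | empty =>
      rw [Finset.sum_empty]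
      exact mvar_nonneg φ _
    | insert _ _ ha ih =>
      rename_i a t'
      rw [Finset.sum_insert ha, Finset.set_biUnion_insert]
      have hdisj : Disjoint (D a) (⋃ b ∈ t', D b) := by
        refine Set.disjoint_iUnion_right.2 ?_
        intro b
        refine Set.disjoint_iUnion_right.2 ?_
        intro hb
        exact hD a (Finset.mem_insert_self a t') b (Finset.mem_insert_of_mem hb)
          (fun h => ha (h ▸ hb))
      calc mvar φ (D a) + ∑ b ∈ t', mvar φ (D b)
          ≤ mvar φ (D a) + mvar φ (⋃ b ∈ t', D b) := by
            gcongr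
            exact ih (fun x hx y hy hxy => hD x (Finset.mem_insert_of_mem hx) y
              (Finset.mem_insert_of_mem hy) hxy)
      _ ≤ mvar φ (D a ∪ ⋃ b ∈ t', D b) := mvar_superadd φ hdisj
  exact key.trans (mvar_le φ _)

theorem mvar_peel (S : Set J) (X : ℕ → Set J) (t : Finset ℕ) :
    mvar φ S - ∑ a ∈ t, mvar φ (S ∩ X a) ≤ mvar φ (S \ ⋃ a ∈ t, X a) := by
  classical
  induction t using Finset.induction_on generalizing S with
  | empty =>
    rw [Finset.sum_empty]
    have h0 : S \ ⋃ a ∈ (∅ : Finset ℕ), X a = S := by simp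
    rw [h0, sub_zero]
  | insert _ _ ha ih =>
    rename_i a t'
    rw [Finset.sum_insert ha, Finset.set_biUnion_insert]
    have h1 : S \ (X a ∪ ⋃ b ∈ t', X b) = (S \ X a) \ ⋃ b ∈ t', X b := by
      rw [Set.diff_diff]
    rw [h1]
    have h2 := ih (S \ X a)
    have h3 : ∀ b, mvar φ ((S \ X a) ∩ X b) ≤ mvar φ (S ∩ X b) := by
      intro b
      exact mvar_mono φ (Set.inter_subset_inter_left _ Set.diff_subset)
    have h4 : mvar φ S - mvar φ (S ∩ X a) ≤ mvar φ (S \ X a) := by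
      have := mvar_split φ S (X a)
      linarith
    have h5 : ∑ b ∈ t', mvar φ ((S \ X a) ∩ X b) ≤ ∑ b ∈ t', mvar φ (S ∩ X b) :=
      Finset.sum_le_sum (fun b _ => h3 b)
    linarith

/-- The key dichotomy: either some `A i₀` correlates with `U`-many `A i` in `mvar`-mass. -/
theorem claim {I : Type*} (U : Ultrafilter I) (A : I → Set J) (B : Set J) (T : Set I)
    (hT : T ∈ U) {β : ℝ} (hβ : 0 < β)
    (hmass : ∀ i ∈ T, β ≤ mvar φ (B ∩ A i)) :
    ∃ i₀ ∈ T, ∃ β' > (0:ℝ), {i | i ∈ T ∧ β' ≤ mvar φ (B ∩ A i₀ ∩ A i)} ∈ U := by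
  classical
  by_contra hcon
  push_neg at hcon
  set M : ℝ := ‖φ‖ with hM
  set n : ℕ := ⌈(2*M)/β⌉₊ + 1 with hn
  have hn0 : 0 < n := Nat.succ_pos _
  set c : ℝ := β/(2*n) with hc
  have hc0 : 0 < c := by positivity
  -- build a finite sequence with small pairwise correlations
  have hseq : ∀ nn : ℕ, ∃ s : ℕ → I, (∀ b < nn, s b ∈ T) ∧
      ∀ a b : ℕ, a < b → b < nn → mvar φ (B ∩ A (s a) ∩ A (s b)) < c := by
    intro nn
    induction nn with
    | zero =>
      obtain ⟨i₁, -⟩ := U.nonempty_of_mem hT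
      exact ⟨fun _ => i₁, fun b hb => absurd hb (Nat.not_lt_zero b),
        fun a b _ hb => absurd hb (Nat.not_lt_zero b)⟩
    | succ nn ih =>
      obtain ⟨s, hs1, hs2⟩ := ih
      have hgood : (T ∩ ⋂ a ∈ Finset.range nn, {i | mvar φ (B ∩ A (s a) ∩ A i) < c}) ∈ U := by
        refine Filter.inter_mem hT ?_
        refine (Filter.biInter_finset_mem _).2 ?_
        intro a ha
        have h1 := hcon (s a) (hs1 a (Finset.mem_range.1 ha)) c hc0
        have h2 : {i | i ∈ T ∧ c ≤ mvar φ (B ∩ A (s a) ∩ A i)}ᶜ ∈ U :=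
          (Ultrafilter.compl_mem_iff_notMem).2 h1
        have h2' : {i | i ∈ T ∧ c ≤ mvar φ (B ∩ A (s a) ∩ A i)}ᶜ ∩ T ∈ U :=
          Filter.inter_mem h2 hT
        refine Filter.mem_of_superset h2' ?_
        rintro i ⟨hic, hiT⟩
        simp only [Set.mem_compl_iff, Set.mem_setOf_eq, not_and, not_le] at hic
        exact hic hiT
      obtain ⟨inew, hinew1, hinew2⟩ := U.nonempty_of_mem hgood
      rw [Set.mem_iInter₂] at hinew2
      refine ⟨Function.update s nn inew, ?_, ?_⟩
      · intro b hb
        rcases Nat.lt_succ_iff_lt_or_eq.1 hb with h | rfl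
        · rw [Function.update_of_ne (Nat.ne_of_lt h)]
          exact hs1 b h
        · rw [Function.update_self]
          exact hinew1
      · intro a b hab hb
        rcases Nat.lt_succ_iff_lt_or_eq.1 hb with h | rfl
        · rw [Function.update_of_ne (Nat.ne_of_lt (hab.trans h)),
            Function.update_of_ne (Nat.ne_of_lt h)]
          exact hs2 a b hab h
        · rw [Function.update_of_ne (Nat.ne_of_lt hab), Function.update_self]
          exact hinew2 a (Finset.mem_range.2 hab)
  obtain ⟨s, hs1, hs2⟩ := hseq n
  -- disjointified sets
  set E : ℕ → Set J := fun b => (B ∩ A (s b)) \ ⋃ a ∈ Finset.range b, A (s a) with hE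
  have hElow : ∀ b < n, β/2 ≤ mvar φ (E b) := by
    intro b hb
    have h1 := mvar_peel φ (B ∩ A (s b)) (fun a => A (s a)) (Finset.range b)
    have h2 : ∀ a ∈ Finset.range b, mvar φ ((B ∩ A (s b)) ∩ A (s a)) ≤ c := by
      intro a ha
      have h3 : (B ∩ A (s b)) ∩ A (s a) = (B ∩ A (s a)) ∩ A (s b) := by
        rw [Set.inter_right_comm]
      rw [h3]
      exact (hs2 a b (Finset.mem_range.1 ha) hb).le
    have h4 : ∑ a ∈ Finset.range b, mvar φ ((B ∩ A (s b)) ∩ A (s a)) ≤ b * c := by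
      calc ∑ a ∈ Finset.range b, mvar φ ((B ∩ A (s b)) ∩ A (s a))
          ≤ ∑ _a ∈ Finset.range b, c := Finset.sum_le_sum h2
      _ = b * c := by rw [Finset.sum_const, Finset.card_range, nsmul_eq_mul]
    have h5 : (b:ℝ) * c ≤ n * c := by
      have : (b:ℝ) ≤ n := by exact_mod_cast hb.le
      nlinarith
    have h6 : (n:ℝ) * c = β/2 := by
      rw [hc]
      field_simp
    have h7 : β ≤ mvar φ (B ∩ A (s b)) := hmass (s b) (hs1 b hb)
    nlinarith [h1]
  -- disjointness
  have hEdisj : ∀ a ∈ Finset.range n, ∀ b ∈ Finset.range n, a ≠ b → Disjoint (E a) (E b) := by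
    have key : ∀ a b : ℕ, a < b → Disjoint (E a) (E b) := by
      intro a b hab
      rw [Set.disjoint_left]
      intro j hja hjb
      have h1 : j ∈ A (s a) := hja.1.2
      have h2 : j ∉ ⋃ a' ∈ Finset.range b, A (s a') := hjb.2
      exact h2 (Set.mem_biUnion (Finset.mem_range.2 hab) h1)
    intro a _ b _ hab
    rcases Nat.lt_or_ge a b with h | h
    · exact key a b h
    · exact (key b a (lt_of_le_of_ne h (Ne.symm hab))).symm
  have hsum := mvar_finset_sum_le φ (Finset.range n) E hEdisj
  have hsum2 : (n:ℝ) * (β/2) ≤ ∑ b ∈ Finset.range n, mvar φ (E b) := by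
    calc (n:ℝ) * (β/2) = ∑ _b ∈ Finset.range n, β/2 := by
          rw [Finset.sum_const, Finset.card_range, nsmul_eq_mul]
    _ ≤ ∑ b ∈ Finset.range n, mvar φ (E b) :=
        Finset.sum_le_sum (fun b hb => hElow b (Finset.mem_range.1 hb))
  -- contradiction with n > 2M/β
  have hnM : (2*M)/β < (n:ℝ) := by
    rw [hn]
    push_cast
    have := Nat.le_ceil ((2*M)/β)
    linarith
  have : M < (n:ℝ) * (β/2) := by
    rw [div_lt_iff₀ hβ] at hnM
    nlinarith
  linarith [hsum, hsum2]

end Claim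


/-- state of the recursive construction -/
structure CState (I J : Type*) where
  idx : I
  pt : J
  T : Set I
  β : ℝ
  B : Set J

section Core
variable {I J : Type*}

theorem core (U : Ultrafilter I) (f' : I → J → ℂ) {C : ℝ} (hC : 0 < C)
    (hf : ∀ i j, ‖f' i j‖ ≤ C)
    (h0 : ∀ j, Tendsto (fun i => f' i j) ↑U (𝓝 0))
    (hDL : ∀ (U' : Ultrafilter I) (V : Ultrafilter J),
      Tendsto (fun i => ulim V (f' i)) ↑U'
        (𝓝 (ulim V (fun j => ulim U' (fun i => f' i j)))))
    (φ : Linf J →L[ℂ] ℂ) (g' : I → Linf J) (hg' : ∀ i j, (g' i : J → ℂ) j = f' i j) :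
    Tendsto (fun i => φ (g' i)) ↑U (𝓝 0) := by
  classical
  have hgb : ∀ i, ‖g' i‖ ≤ C :=
    fun i => lp.norm_le_of_forall_le hC.le (fun j => by rw [hg']; exact hf i j)
  have hφb : ∀ i, ‖φ (g' i)‖ ≤ ‖φ‖ * C := by
    intro i
    calc ‖φ (g' i)‖ ≤ ‖φ‖ * ‖g' i‖ := φ.le_opNorm _
    _ ≤ ‖φ‖ * C := by gcongr; exact hgb i
  set c : ℂ := ulim U (fun i => φ (g' i)) with hc
  have hct : Tendsto (fun i => φ (g' i)) ↑U (𝓝 c) := tendsto_ulim U hφb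
  suffices hc0 : c = 0 by rwa [hc0] at hct
  by_contra hcne
  rcases U.le_cofinite_or_eq_pure with hUfree | ⟨i₀, rfl⟩
  swap
  · -- principal case
    have h1 : ∀ j, f' i₀ j = 0 := by
      intro j
      exact tendsto_nhds_unique (tendsto_pure_nhds (fun i => f' i j) i₀) (h0 j)
    have h2 : g' i₀ = 0 := by
      ext j
      rw [hg' i₀ j, h1 j, lp.coeFn_zero, Pi.zero_apply]
    have h3 : c = φ (g' i₀) :=
      tendsto_nhds_unique hct (tendsto_pure_nhds (fun i => φ (g' i)) i₀)
    rw [h3, h2, map_zero] at hcne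
    exact hcne rfl
  -- free case
  set ε : ℝ := ‖c‖/2 with hε
  have hε0 : 0 < ε := by
    rw [hε]
    have := norm_pos_iff.2 hcne
    linarith
  have hS₀ : {i | ε ≤ ‖φ (g' i)‖} ∈ U := by
    have h1 : ∀ᶠ i in ↑U, ε ≤ ‖φ (g' i)‖ :=
      hct.norm.eventually (eventually_ge_nhds (by rw [hε]; linarith [norm_pos_iff.2 hcne]))
    exact h1
  set S₀ : Set I := {i | ε ≤ ‖φ (g' i)‖} with hS₀def
  set δ : ℝ := ε/(2*(‖φ‖+1)) with hδ
  have hδ0 : 0 < δ := by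
    rw [hδ]
    positivity
  set A : I → Set J := fun i => {j | δ ≤ ‖f' i j‖} with hA
  -- the link inequality
  have hlink : ∀ i, ‖φ (g' i)‖ ≤ δ*‖φ‖ + C * mvar φ (A i) := by
    intro i
    have hm1 : ‖φ (mask (A i) (g' i))‖ ≤ C * mvar φ (A i) := by
      refine norm_phi_mask_le φ (g' i) hC ?_
      intro j
      rw [hg']
      exact hf i j
    have hm2 : ‖φ (mask (A i)ᶜ (g' i))‖ ≤ ‖φ‖ * δ := by
      have hn : ‖mask (A i)ᶜ (g' i)‖ ≤ δ := by
        refine lp.norm_le_of_forall_le hδ0.le ?_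
        intro j
        rw [mask_apply]
        by_cases hj : j ∈ (A i)ᶜ
        · rw [Set.indicator_of_mem hj, hg']
          have : ¬ (δ ≤ ‖f' i j‖) := hj
          linarith [not_le.1 this]
        · rw [Set.indicator_of_notMem hj, norm_zero]
          exact hδ0.le
      calc ‖φ (mask (A i)ᶜ (g' i))‖ ≤ ‖φ‖ * ‖mask (A i)ᶜ (g' i)‖ := φ.le_opNorm _
      _ ≤ ‖φ‖ * δ := by gcongr
    calc ‖φ (g' i)‖ = ‖φ (mask (A i) (g' i)) + φ (mask (A i)ᶜ (g' i))‖ := by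
          rw [← map_add, mask_add_mask_compl]
    _ ≤ ‖φ (mask (A i) (g' i))‖ + ‖φ (mask (A i)ᶜ (g' i))‖ := norm_add_le _ _
    _ ≤ C * mvar φ (A i) + ‖φ‖ * δ := add_le_add hm1 hm2
    _ = δ*‖φ‖ + C * mvar φ (A i) := by ring
  set α : ℝ := ε/(2*C) with hα
  have hα0 : 0 < α := by rw [hα]; positivity
  have hδφ : δ * ‖φ‖ ≤ ε/2 := by
    rw [hδ, div_mul_eq_mul_div, div_le_div_iff₀ (by positivity) (by norm_num : (0:ℝ) < 2)]
    nlinarith [norm_nonneg φ, hε0]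
  have hmass₀ : ∀ i ∈ S₀, α ≤ mvar φ (A i) := by
    intro i hi
    have h1 : ε ≤ ‖φ (g' i)‖ := hi
    have h2 := hlink i
    have h3 : ε/2 ≤ C * mvar φ (A i) := by linarith
    rw [hα, div_le_iff₀ (by positivity : (0:ℝ) < 2*C)]
    nlinarith
  -- validity predicate for states
  set Valid : CState I J → Prop := fun s =>
    s.T ∈ U ∧ 0 < s.β ∧ (∀ i ∈ s.T, s.β ≤ mvar φ (s.B ∩ A i)) ∧
    (∀ i ∈ s.T, ‖f' i s.pt‖ < δ/2) ∧ s.idx ∉ s.T ∧ s.pt ∈ s.B ∧ s.B ⊆ A s.idx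
    with hValid
  -- one step of the construction
  have step : ∀ (T : Set I) (β : ℝ) (B : Set J), T ∈ U → 0 < β →
      (∀ i ∈ T, β ≤ mvar φ (B ∩ A i)) →
      ∃ s' : CState I J, Valid s' ∧ s'.T ⊆ T ∧ s'.B = B ∩ A s'.idx ∧ s'.idx ∈ T := by
    intro T β B hT hβ hmass
    obtain ⟨i₁, hi₁T, β', hβ', hset⟩ := claim φ U A B T hT hβ hmass
    have hB' : (B ∩ A i₁).Nonempty := by
      refine nonempty_of_mvar_pos φ (lt_of_lt_of_le hβ ?_)
      exact hmass i₁ hi₁T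
    obtain ⟨p, hp⟩ := hB'
    have hsm : {i | ‖f' i p‖ < δ/2} ∈ U := by
      have h1 : ∀ᶠ i in ↑U, ‖f' i p‖ < δ/2 :=
        (h0 p).norm.eventually (eventually_lt_nhds (by rw [norm_zero]; positivity))
      exact h1
    have hrem : {i₁}ᶜ ∈ U :=
      hUfree ((Set.finite_singleton i₁).compl_mem_cofinite)
    set T' : Set I := {i | i ∈ T ∧ β' ≤ mvar φ (B ∩ A i₁ ∩ A i)} ∩
        {i | ‖f' i p‖ < δ/2} ∩ {i₁}ᶜ with hT'
    have hT'U : T' ∈ U := Filter.inter_mem (Filter.inter_mem hset hsm) hrem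
    refine ⟨⟨i₁, p, T', β', B ∩ A i₁⟩, ?_, ?_, rfl, hi₁T⟩
    · refine ⟨hT'U, hβ', ?_, ?_, ?_, hp, Set.inter_subset_right⟩
      · rintro i ⟨⟨hi1, -⟩, -⟩
        exact hi1.2
      · rintro i ⟨⟨-, hi2⟩, -⟩
        exact hi2
      · rintro ⟨⟨-, -⟩, hni⟩
        exact hni rfl
    · rintro i ⟨⟨hi1, -⟩, -⟩
      exact hi1.1
  -- initial state
  have hmassinit : ∀ i ∈ S₀, α ≤ mvar φ (Set.univ ∩ A i) := by
    intro i hi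
    simp only [Set.univ_inter]
    exact hmass₀ i hi
  obtain ⟨s₁, hs₁V, -, -, -⟩ := step S₀ α Set.univ hS₀ hα0 hmassinit
  -- the recursive sequence
  set next : {s : CState I J // Valid s} → {s : CState I J // Valid s} := fun x =>
    ⟨(step x.1.T x.1.β x.1.B x.2.1 x.2.2.1 x.2.2.2.1).choose,
     (step x.1.T x.1.β x.1.B x.2.1 x.2.2.1 x.2.2.2.1).choose_spec.1⟩ with hnext
  set seq : ℕ → {s : CState I J // Valid s} :=
    fun n => Nat.rec ⟨s₁, hs₁V⟩ (fun _ x => next x) n with hseqdef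
  have hseq_succ : ∀ n, seq (n+1) = next (seq n) := fun n => rfl
  set sq : ℕ → CState I J := fun n => (seq n).1 with hsq
  have hValidn : ∀ n, Valid (sq n) := fun n => (seq n).2
  have hrel : ∀ n, (sq (n+1)).T ⊆ (sq n).T ∧
      (sq (n+1)).B = (sq n).B ∩ A ((sq (n+1)).idx) ∧ (sq (n+1)).idx ∈ (sq n).T := by
    intro n
    have h1 : sq (n+1) = (step (sq n).T (sq n).β (sq n).B (seq n).2.1 (seq n).2.2.1
        (seq n).2.2.2.1).choose := rfl
    rw [h1]
    exact (step (sq n).T (sq n).β (sq n).B (seq n).2.1 (seq n).2.2.1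
        (seq n).2.2.2.1).choose_spec.2
  -- chains
  have hTstep : ∀ n, (sq (n+1)).T ⊆ (sq n).T := fun n => (hrel n).1
  have hBstep : ∀ n, (sq (n+1)).B ⊆ (sq n).B := by
    intro n
    rw [(hrel n).2.1]
    exact Set.inter_subset_left
  have hTchain : ∀ a b : ℕ, a ≤ b → (sq b).T ⊆ (sq a).T := by
    intro a b hab
    induction hab with
    | refl => exact subset_rfl
    | step h ih => exact (hTstep _).trans ih
  have hBchain : ∀ a b : ℕ, a ≤ b → (sq b).B ⊆ (sq a).B := by
    intro a b hab
    induction hab with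
    | refl => exact subset_rfl
    | step h ih => exact (hBstep _).trans ih
  have hBA : ∀ n, (sq n).B ⊆ A ((sq n).idx) := fun n => (hValidn n).2.2.2.2.2.2
  have hptB : ∀ n, (sq n).pt ∈ (sq n).B := fun n => (hValidn n).2.2.2.2.2.1
  have hidx_mem : ∀ n, (sq (n+1)).idx ∈ (sq n).T := fun n => (hrel n).2.2
  have hidx_ne : ∀ a b : ℕ, a < b → (sq a).idx ≠ (sq b).idx := by
    intro a b hab
    obtain ⟨m, rfl⟩ : ∃ m, b = m + 1 := ⟨b - 1, (Nat.succ_pred_eq_of_pos ((Nat.zero_le a).trans_lt hab)).symm⟩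
    have h1 : (sq (m+1)).idx ∈ (sq a).T :=
      hTchain a m (Nat.lt_succ_iff.1 hab) (hidx_mem m)
    have h2 : (sq a).idx ∉ (sq a).T := (hValidn a).2.2.2.2.1
    intro h
    rw [h] at h2
    exact h2 h1
  have hidx_inj : Function.Injective (fun r : ℕ => (sq r).idx) := by
    intro a b hab
    by_contra hne
    rcases Nat.lt_or_ge a b with h | h
    · exact hidx_ne a b h hab
    · exact hidx_ne b a (lt_of_le_of_ne h (Ne.symm hne)) hab.symm
  have hpt_small : ∀ a b : ℕ, a < b → ‖f' ((sq b).idx) ((sq a).pt)‖ < δ/2 := by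
    intro a b hab
    obtain ⟨m, rfl⟩ : ∃ m, b = m + 1 := ⟨b - 1, (Nat.succ_pred_eq_of_pos ((Nat.zero_le a).trans_lt hab)).symm⟩
    have h1 : (sq (m+1)).idx ∈ (sq a).T :=
      hTchain a m (Nat.lt_succ_iff.1 hab) (hidx_mem m)
    exact (hValidn a).2.2.2.1 _ h1
  -- the ultrafilter V on J
  set N : Set J := Set.range (fun r : ℕ => (sq r).pt) with hN
  set F : Filter J := ⨅ r : ℕ, Filter.principal (N ∩ (sq r).B) with hF
  have hJne : Nonempty J := ⟨(sq 0).pt⟩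
  have hFne : F.NeBot := by
    refine Filter.iInf_neBot_of_directed ?_ ?_
    · intro a b
      refine ⟨max a b, ?_, ?_⟩
      · exact Filter.principal_mono.2
          (Set.inter_subset_inter_right N (hBchain a (max a b) (le_max_left a b)))
      · exact Filter.principal_mono.2
          (Set.inter_subset_inter_right N (hBchain b (max a b) (le_max_right a b)))
    · intro r
      rw [Filter.principal_neBot_iff]
      exact ⟨(sq r).pt, ⟨r, rfl⟩, hptB r⟩
  set V : Ultrafilter J := @Ultrafilter.of J F hFne with hV
  have hVle : (V : Filter J) ≤ F := Ultrafilter.of_le F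
  have hVNB : ∀ r, N ∩ (sq r).B ∈ V := by
    intro r
    exact hVle (Filter.le_principal_iff.1 (iInf_le _ r))
  have hVB : ∀ r, (sq r).B ∈ V :=
    fun r => Filter.mem_of_superset (hVNB r) Set.inter_subset_right
  have hVN : N ∈ V :=
    Filter.mem_of_superset (hVNB 0) Set.inter_subset_left
  -- column limits ≥ δ at the chosen rows
  have hyV_ge : ∀ r, δ ≤ ‖ulim V (f' ((sq r).idx))‖ := by
    intro r
    refine le_norm_ulim (fun j => hf _ j) ?_
    refine Filter.mem_of_superset (hVB r) ?_
    intro j hj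
    exact (hBA r) hj
  -- the ultrafilter U' on I along the chosen rows
  set U' : Ultrafilter I := Ultrafilter.map (fun r : ℕ => (sq r).idx) (Filter.hyperfilter ℕ)
    with hU'
  set xU' : J → ℂ := fun j => ulim U' (fun i => f' i j) with hxU'
  have hxU'b : ∀ j, ‖xU' j‖ ≤ C := fun j => norm_ulim_le (fun i => hf i j)
  have hxseq : ∀ j : J, Tendsto (fun r : ℕ => f' ((sq r).idx) j) (Filter.hyperfilter ℕ)
      (𝓝 (xU' j)) := by
    intro j
    have h1 : Tendsto (fun i => f' i j) ↑U' (𝓝 (xU' j)) := tendsto_ulim U' (fun i => hf i j)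
    rw [hU', Ultrafilter.coe_map, Filter.tendsto_map'_iff] at h1
    exact h1
  have hxU'_small : ∀ p ∈ N, ‖xU' p‖ ≤ δ/2 := by
    rintro - ⟨a, rfl⟩
    refine le_of_tendsto (hxseq ((sq a).pt)).norm ?_
    have hcof : {r : ℕ | a < r} ∈ Filter.hyperfilter ℕ := by
      refine Filter.mem_hyperfilter_of_finite_compl ?_
      have : {r : ℕ | a < r}ᶜ = {r | r ≤ a} := by
        ext r
        simp [Nat.not_lt]
      rw [this]
      exact Set.finite_Iic a
    refine Filter.mem_of_superset hcof ?_
    intro r hr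
    exact (hpt_small a r hr).le
  -- double limit contradiction
  set L : ℂ := ulim V xU' with hL
  have hL_le : ‖L‖ ≤ δ/2 := by
    refine norm_ulim_le_of_eventually hxU'b ?_
    exact Filter.mem_of_superset hVN (fun p hp => hxU'_small p hp)
  have hDL' := hDL U' V
  have hDL'' : Tendsto (fun r : ℕ => ulim V (f' ((sq r).idx))) (Filter.hyperfilter ℕ) (𝓝 L) := by
    have h1 := hDL'
    rw [hU', Ultrafilter.coe_map, Filter.tendsto_map'_iff] at h1
    exact h1
  have hL_ge : δ ≤ ‖L‖ := by
    refine ge_of_tendsto hDL''.norm ?_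
    exact Eventually.of_forall (fun r => hyV_ge r)
  linarith

end Core

section Glue
variable {I J : Type*}

/-- the symmetric double-limit condition -/
def DLcond (f : I → J → ℂ) : Prop :=
  ∀ (U : Ultrafilter I) (V : Ultrafilter J),
    Tendsto (fun i => ulim V (f i)) ↑U (𝓝 (ulim V (fun j => ulim U (fun i => f i j))))

theorem dl_flip {f : I → J → ℂ} {C : ℝ} (hf : ∀ i j, ‖f i j‖ ≤ C)
    (hDL : DLcond f) : DLcond (fun j i => f i j) := by
  intro V U
  have h1 : ulim U (fun i => ulim V (f i)) = ulim V (fun j => ulim U (fun i => f i j)) :=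
    ulim_eq (hDL U V)
  rw [show (ulim U fun i => ulim V fun j => (fun j i => f i j) j i)
      = ulim U (fun i => ulim V (f i)) from rfl, h1]
  exact tendsto_ulim V (fun j => norm_ulim_le (fun i => hf i j))

theorem wcond_to_dl {f : I → J → ℂ} {C : ℝ} (hf : ∀ i j, ‖f i j‖ ≤ C)
    {g : I → Linf J} (hg : ∀ i j, (g i : J → ℂ) j = f i j)
    (hW : WCond g) : DLcond f := by
  intro U V
  obtain ⟨x, hx⟩ := hW U
  have hcoord : ∀ j, Tendsto (fun i => f i j) ↑U (𝓝 ((x : J → ℂ) j)) := by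
    intro j
    have h1 := hx (evalCLM j)
    simp only [evalCLM_apply] at h1
    refine h1.congr ?_
    intro i
    exact hg i j
  have hxj : ∀ j, ulim U (fun i => f i j) = (x : J → ℂ) j :=
    fun j => ulim_eq (hcoord j)
  have h2 := hx (ulimCLM V)
  simp only [ulimCLM_apply] at h2
  have h3 : (fun i => ulim V ((g i : J → ℂ))) = (fun i => ulim V (f i)) := by
    funext i
    congr 1
    funext j
    exact hg i j
  rw [h3] at h2
  have h4 : ulim V (fun j => ulim U (fun i => f i j)) = ulim V ((x : J → ℂ)) := by
    congr 1
    funext j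
    exact hxj j
  rw [h4]
  exact h2

theorem dl_to_wcond {f : I → J → ℂ} {C : ℝ} (hC : 0 < C) (hf : ∀ i j, ‖f i j‖ ≤ C)
    {g : I → Linf J} (hg : ∀ i j, (g i : J → ℂ) j = f i j)
    (hDL : DLcond f) : WCond g := by
  intro U
  set xU : J → ℂ := fun j => ulim U (fun i => f i j) with hxU
  have hxUb : ∀ j, ‖xU j‖ ≤ C := fun j => norm_ulim_le (fun i => hf i j)
  set x : Linf J := mk xU hxUb with hx
  refine ⟨x, ?_⟩
  intro φ
  -- the shifted matrix
  set f2 : I → J → ℂ := fun i j => f i j - xU j with hf2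
  set g2 : I → Linf J := fun i => g i - x with hg2def
  have hg2 : ∀ i j, (g2 i : J → ℂ) j = f2 i j := by
    intro i j
    rw [hg2def]
    have : (↑(g i - x) : J → ℂ) j = (g i : J → ℂ) j - (x : J → ℂ) j := by
      rw [lp.coeFn_sub]
      rfl
    rw [this, hg i j]
    rfl
  have hf2b : ∀ i j, ‖f2 i j‖ ≤ C + C := by
    intro i j
    calc ‖f i j - xU j‖ ≤ ‖f i j‖ + ‖xU j‖ := norm_sub_le _ _
    _ ≤ C + C := add_le_add (hf i j) (hxUb j)
  have h0 : ∀ j, Tendsto (fun i => f2 i j) ↑U (𝓝 0) := by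
    intro j
    have h1 : Tendsto (fun i => f i j) ↑U (𝓝 (xU j)) := tendsto_ulim U (fun i => hf i j)
    have h2 := h1.sub_const (xU j)
    rwa [sub_self] at h2
  have hDL2 : ∀ (U' : Ultrafilter I) (V : Ultrafilter J),
      Tendsto (fun i => ulim V (f2 i)) ↑U'
        (𝓝 (ulim V (fun j => ulim U' (fun i => f2 i j)))) := by
    intro U' V
    have hVx : Tendsto xU ↑V (𝓝 (ulim V xU)) := tendsto_ulim V hxUb
    have hstar : ∀ i, ulim V (f2 i) = ulim V (f i) - ulim V xU := by
      intro i
      have hVi : Tendsto (f i) ↑V (𝓝 (ulim V (f i))) := tendsto_ulim V (fun j => hf i j)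
      exact ulim_eq (hVi.sub hVx)
    set xU2' : J → ℂ := fun j => ulim U' (fun i => f2 i j) with hxU2'
    set xUp : J → ℂ := fun j => ulim U' (fun i => f i j) with hxUp
    have hstar2 : ∀ j, xU2' j = xUp j - xU j := by
      intro j
      have h1 : Tendsto (fun i => f i j) ↑U' (𝓝 (xUp j)) := tendsto_ulim U' (fun i => hf i j)
      exact ulim_eq (h1.sub_const (xU j))
    have hstar3 : ulim V xU2' = ulim V xUp - ulim V xU := by
      have h1 : Tendsto xUp ↑V (𝓝 (ulim V xUp)) :=
        tendsto_ulim V (fun j => norm_ulim_le (fun i => hf i j))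
      have h2 := h1.sub hVx
      refine ulim_eq (h2.congr ?_)
      intro j
      exact (hstar2 j).symm
    rw [hstar3]
    have h5 := (hDL U' V).sub_const (ulim V xU)
    refine h5.congr ?_
    intro i
    exact (hstar i).symm
  have hcore := core U f2 (by linarith : (0:ℝ) < C + C) hf2b h0 hDL2 φ g2 hg2
  have h6 : ∀ i, φ (g2 i) = φ (g i) - φ x := by
    intro i
    rw [hg2def, map_sub]
  have h7 := hcore.add_const (φ x)
  rw [zero_add] at h7
  refine h7.congr ?_
  intro i
  rw [h6 i, sub_add_cancel]

end Glue
end RWC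

open Filter Topology RWC in
/-- for a bounded complex matrix `f` on `I × J`, the set of rows is
relatively weakly compact in `ℓ^∞(J)` iff the set of columns is relatively
weakly compact in `ℓ^∞(I)`.  Here `g i` is the row `f i` and `h j` is the
column `f · j`, viewed as elements of the `ℓ^∞` spaces. -/
theorem rows_relWeaklyCompact_iff_columns {I J : Type*} (f : I → J → ℂ)
    (hb : ∃ C, ∀ i j, ‖f i j‖ ≤ C)
    (g : I → lp (fun _ : J => ℂ) ∞) (hg : ∀ i j, g i j = f i j)
    (h : J → lp (fun _ : I => ℂ) ∞) (hh : ∀ j i, h j i = f i j) :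
    IsCompact (closure (toWeakSpace ℂ (lp (fun _ : J => ℂ) ∞) '' Set.range g)) ↔
    IsCompact (closure (toWeakSpace ℂ (lp (fun _ : I => ℂ) ∞) '' Set.range h)) := by
  obtain ⟨C, hC⟩ := hb
  set C1 : ℝ := max C 1 with hC1def
  have hC1 : 0 < C1 := lt_of_lt_of_le one_pos (le_max_right _ _)
  have hf1 : ∀ i j, ‖f i j‖ ≤ C1 := fun i j => (hC i j).trans (le_max_left _ _)
  have hgb : ∀ i, ‖g i‖ ≤ C1 :=
    fun i => lp.norm_le_of_forall_le hC1.le (fun j => by rw [hg i j]; exact hf1 i j)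
  have hhb : ∀ j, ‖h j‖ ≤ C1 :=
    fun j => lp.norm_le_of_forall_le hC1.le (fun i => by rw [hh j i]; exact hf1 i j)
  have hrows : IsCompact (closure (toWeakSpace ℂ (lp (fun _ : J => ℂ) ∞) '' Set.range g)) ↔
      WCond g := main_iff hC1.le hgb
  have hcols : IsCompact (closure (toWeakSpace ℂ (lp (fun _ : I => ℂ) ∞) '' Set.range h)) ↔
      WCond h := main_iff hC1.le hhb
  have hg' : ∀ i j, (g i : J → ℂ) j = f i j := hg
  have hh' : ∀ j i, (h j : I → ℂ) i = (fun j i => f i j) j i := hh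
  have hft : ∀ j i, ‖(fun j i => f i j) j i‖ ≤ C1 := fun j i => hf1 i j
  rw [hrows, hcols]
  constructor
  · intro hW
    refine dl_to_wcond hC1 hft hh' ?_
    exact dl_flip hf1 (wcond_to_dl hf1 hg' hW)
  · intro hW
    refine dl_to_wcond hC1 hf1 hg' ?_
    exact dl_flip hft (wcond_to_dl hft hh' hW)
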